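/- There exists an optimal solution (φ*, ψ*) to the entropic OT dual max_{φ,ψ} ⟨φ,r⟩ + ⟨ψ,c⟩ − η·LSE_{ij}(−(C_{ij} − φ_i − ψ_j)/η) satisfying ‖φ*‖_∞ ≤ ‖C‖_∞ − η·log(min_i r_i) and ‖ψ*‖_∞ ≤ ‖C‖_∞ − η·log(min_j c_j). -/

import Mathlib

lemma jensen_log_aux {n : ℕ} (w x : Fin n → ℝ) (hw : ∀ i, 0 ≤ w i)
    (hw1 : ∑ i, w i = 1) (hx : ∀ i, 0 < x i) :
    ∑ i, w i * Real.log (x i) ≤ Real.log (∑ i, w i * x i) := by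
  have h := strictConcaveOn_log_Ioi.concaveOn.le_map_sum (t := Finset.univ)
    (w := w) (p := x) (fun i _ => hw i) hw1 (fun i _ => hx i)
  simpa [smul_eq_mul] using h

lemma key1_aux {n : ℕ} (η : ℝ) (hη : 0 < η) (w a : Fin n → ℝ)
    (hw : ∀ i, 0 < w i) (hw1 : ∑ i, w i = 1) (ha : ∀ i, 0 < a i) :
    ∑ i, Real.exp ((η * (Real.log (w i) - Real.log (a i))) / η) * a i = 1 := by
  rw [← hw1]
  apply Finset.sum_congr rfl
  intro i _
  rw [mul_div_cancel_left₀ _ (ne_of_gt hη), Real.exp_sub, Real.exp_log (hw i),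
    Real.exp_log (ha i), div_mul_cancel₀ _ (ne_of_gt (ha i))]

lemma key2_aux {n : ℕ} (η : ℝ) (hη : 0 < η) (w a u : Fin n → ℝ)
    (hw : ∀ i, 0 < w i) (hw1 : ∑ i, w i = 1) (ha : ∀ i, 0 < a i) :
    (∑ i, u i * w i) - η * Real.log (∑ i, Real.exp (u i / η) * a i) ≤
      ∑ i, (η * (Real.log (w i) - Real.log (a i))) * w i := by
  set x : Fin n → ℝ := fun i => Real.exp (u i / η) * a i / w i with hxdef
  have hx : ∀ i, 0 < x i := fun i => div_pos (mul_pos (Real.exp_pos _) (ha i)) (hw i)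
  have hsum : ∑ i, w i * x i = ∑ i, Real.exp (u i / η) * a i := by
    apply Finset.sum_congr rfl
    intro i _
    show w i * (Real.exp (u i / η) * a i / w i) = _
    rw [mul_comm, div_mul_cancel₀ _ (ne_of_gt (hw i))]
  have hj := jensen_log_aux w x (fun i => (hw i).le) hw1 hx
  rw [hsum] at hj
  have hlogx : ∀ i, Real.log (x i) = u i / η + Real.log (a i) - Real.log (w i) := by
    intro i
    rw [hxdef]
    rw [Real.log_div (ne_of_gt (mul_pos (Real.exp_pos _) (ha i))) (ne_of_gt (hw i)),
      Real.log_mul (Real.exp_ne_zero _) (ne_of_gt (ha i)), Real.log_exp]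
  have key : ∀ i, u i * w i - (η * (Real.log (w i) - Real.log (a i))) * w i
      = η * (w i * Real.log (x i)) := by
    intro i
    rw [hlogx i]
    field_simp
    try ring
  have h1 : (∑ i, u i * w i) - (∑ i, (η * (Real.log (w i) - Real.log (a i))) * w i)
      = η * ∑ i, w i * Real.log (x i) := by
    rw [Finset.mul_sum, ← Finset.sum_sub_distrib]
    exact Finset.sum_congr rfl fun i _ => key i
  have h2 : η * ∑ i, w i * Real.log (x i)
      ≤ η * Real.log (∑ i, Real.exp (u i / η) * a i) :=
    mul_le_mul_of_nonneg_left hj hη.le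
  linarith

/-- There exists an optimal solution to the entropic OT dual whose potentials
satisfy ‖φ‖_∞ ≤ ‖C‖_∞ − η log(min r) and ‖ψ‖_∞ ≤ ‖C‖_∞ − η log(min c). -/
theorem stmt_12 (n : ℕ) (hn : 0 < n) (η : ℝ) (hη : 0 < η)
    (C : Fin n → Fin n → ℝ) (hC : ∀ i j, 0 ≤ C i j)
    (Cinf : ℝ) (hCinf : IsGreatest (Set.range fun p : Fin n × Fin n => |C p.1 p.2|) Cinf)
    (r c : Fin n → ℝ) (hr0 : ∀ i, 0 < r i) (hr1 : ∑ i, r i = 1)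
    (hc0 : ∀ j, 0 < c j) (hc1 : ∑ j, c j = 1)
    (rmin cmin : ℝ) (hrmin : IsLeast (Set.range r) rmin) (hcmin : IsLeast (Set.range c) cmin)
    (d : (Fin n → ℝ) → (Fin n → ℝ) → ℝ)
    (hd : ∀ φ ψ, d φ ψ = (∑ i, φ i * r i) + (∑ j, ψ j * c j) -
      η * Real.log (∑ i, ∑ j, Real.exp (-(C i j - φ i - ψ j) / η))) :
    ∃ φ ψ : Fin n → ℝ,
      (∀ φ' ψ' : Fin n → ℝ, d φ' ψ' ≤ d φ ψ) ∧
      (∀ i, |φ i| ≤ Cinf - η * Real.log rmin) ∧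
      (∀ j, |ψ j| ≤ Cinf - η * Real.log cmin) := by
  haveI : Nonempty (Fin n) := ⟨⟨0, hn⟩⟩
  have hηne : η ≠ 0 := ne_of_gt hη
  -- basic constants facts
  have hCinf0 : 0 ≤ Cinf := by
    obtain ⟨p, hp⟩ := hCinf.1
    exact hp ▸ abs_nonneg _
  have hCub : ∀ i j, C i j ≤ Cinf := fun i j =>
    (le_abs_self _).trans (hCinf.2 ⟨(i, j), rfl⟩)
  have hrminpos : 0 < rmin := by
    obtain ⟨i0, hi0⟩ := hrmin.1
    exact hi0 ▸ hr0 i0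
  have hrminle : ∀ i, rmin ≤ r i := fun i => hrmin.2 ⟨i, rfl⟩
  have hrle1 : ∀ i, r i ≤ 1 := by
    intro i
    rw [← hr1]
    exact Finset.single_le_sum (fun j _ => (hr0 j).le) (Finset.mem_univ i)
  have hcminpos : 0 < cmin := by
    obtain ⟨j0, hj0⟩ := hcmin.1
    exact hj0 ▸ hc0 j0
  have hcminle : ∀ j, cmin ≤ c j := fun j => hcmin.2 ⟨j, rfl⟩
  have hcle1 : ∀ j, c j ≤ 1 := by
    intro j
    rw [← hc1]
    exact Finset.single_le_sum (fun i _ => (hc0 i).le) (Finset.mem_univ j)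
  have hlogrmin : Real.log rmin ≤ 0 := by
    obtain ⟨i0, hi0⟩ := hrmin.1
    exact Real.log_nonpos hrminpos.le (hi0 ▸ hrle1 i0)
  have hlogcmin : Real.log cmin ≤ 0 := by
    obtain ⟨j0, hj0⟩ := hcmin.1
    exact Real.log_nonpos hcminpos.le (hj0 ▸ hcle1 j0)
  set Mr := Cinf - η * Real.log rmin with hMr
  set Mc := Cinf - η * Real.log cmin with hMc
  have hMr0 : 0 ≤ Mr := by
    have : η * Real.log rmin ≤ 0 := mul_nonpos_of_nonneg_of_nonpos hη.le hlogrmin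
    simp only [hMr]; linarith
  have hMc0 : 0 ≤ Mc := by
    have : η * Real.log cmin ≤ 0 := mul_nonpos_of_nonneg_of_nonpos hη.le hlogcmin
    simp only [hMc]; linarith
  -- row / column partial sums
  set A : (Fin n → ℝ) → Fin n → ℝ := fun ψ i => ∑ j, Real.exp ((ψ j - C i j) / η) with hA
  set B : (Fin n → ℝ) → Fin n → ℝ := fun φ j => ∑ i, Real.exp ((φ i - C i j) / η) with hB
  set Φ : (Fin n → ℝ) → Fin n → ℝ :=
    fun ψ i => η * (Real.log (r i) - Real.log (A ψ i)) with hΦ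
  set Ψf : (Fin n → ℝ) → Fin n → ℝ :=
    fun φ j => η * (Real.log (c j) - Real.log (B φ j)) with hΨ
  have hApos : ∀ ψ i, 0 < A ψ i := fun ψ i =>
    Finset.sum_pos (fun j _ => Real.exp_pos _) Finset.univ_nonempty
  have hBpos : ∀ φ j, 0 < B φ j := fun φ j =>
    Finset.sum_pos (fun i _ => Real.exp_pos _) Finset.univ_nonempty
  have hexp : ∀ x y z : ℝ, Real.exp (-(z - x - y) / η) =
      Real.exp (x / η) * Real.exp ((y - z) / η) := by
    intro x y z
    rw [← Real.exp_add]
    congr 1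
    ring
  have drw : ∀ φ ψ, d φ ψ = (∑ i, φ i * r i) + (∑ j, ψ j * c j) -
      η * Real.log (∑ i, Real.exp (φ i / η) * A ψ i) := by
    intro φ ψ
    rw [hd]
    have hs : (∑ i, ∑ j, Real.exp (-(C i j - φ i - ψ j) / η))
        = ∑ i, Real.exp (φ i / η) * A ψ i := by
      apply Finset.sum_congr rfl
      intro i _
      rw [hA, Finset.mul_sum]
      exact Finset.sum_congr rfl fun j _ => hexp (φ i) (ψ j) (C i j)
    rw [hs]
  have drw' : ∀ φ ψ, d φ ψ = (∑ i, φ i * r i) + (∑ j, ψ j * c j) -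
      η * Real.log (∑ j, Real.exp (ψ j / η) * B φ j) := by
    intro φ ψ
    rw [hd]
    have hs : (∑ i, ∑ j, Real.exp (-(C i j - φ i - ψ j) / η))
        = ∑ j, Real.exp (ψ j / η) * B φ j := by
      rw [Finset.sum_comm]
      apply Finset.sum_congr rfl
      intro j _
      rw [hB, Finset.mul_sum]
      refine Finset.sum_congr rfl fun i _ => ?_
      rw [show -(C i j - φ i - ψ j) = -(C i j - ψ j - φ i) by ring]
      exact hexp (ψ j) (φ i) (C i j)
    rw [hs]
  -- block maximization lemmas
  have L1 : ∀ φ ψ, d φ ψ ≤ d (Φ ψ) ψ := by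
    intro φ ψ
    have h2 := key2_aux η hη r (A ψ) φ hr0 hr1 (hApos ψ)
    have h1 := key1_aux η hη r (A ψ) hr0 hr1 (hApos ψ)
    rw [drw φ ψ, drw (Φ ψ) ψ]
    have hΦA : ∑ i, Real.exp (Φ ψ i / η) * A ψ i = 1 := by
      simpa [hΦ] using h1
    rw [hΦA, Real.log_one, mul_zero, sub_zero]
    have hΦr : ∑ i, Φ ψ i * r i
        = ∑ i, (η * (Real.log (r i) - Real.log (A ψ i))) * r i := by
      simp [hΦ]
    linarith
  have L2 : ∀ φ ψ, d φ ψ ≤ d φ (Ψf φ) := by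
    intro φ ψ
    have h2 := key2_aux η hη c (B φ) ψ hc0 hc1 (hBpos φ)
    have h1 := key1_aux η hη c (B φ) hc0 hc1 (hBpos φ)
    rw [drw' φ ψ, drw' φ (Ψf φ)]
    have hΨB : ∑ j, Real.exp (Ψf φ j / η) * B φ j = 1 := by
      simpa [hΨ] using h1
    rw [hΨB, Real.log_one, mul_zero, sub_zero]
    have hΨc : ∑ j, Ψf φ j * c j
        = ∑ j, (η * (Real.log (c j) - Real.log (B φ j))) * c j := by
      simp [hΨ]
    linarith
  -- shift invariance
  have hshift : ∀ (φ ψ : Fin n → ℝ) (m : ℝ),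
      d (fun i => φ i + m) (fun j => ψ j - m) = d φ ψ := by
    intro φ ψ m
    simp only [hd]
    have e1 : ∑ i, (φ i + m) * r i = (∑ i, φ i * r i) + m := by
      rw [show (∑ i, (φ i + m) * r i) = (∑ i, φ i * r i) + ∑ i, m * r i by
        rw [← Finset.sum_add_distrib]; exact Finset.sum_congr rfl fun i _ => by ring]
      rw [← Finset.mul_sum, hr1, mul_one]
    have e2 : ∑ j, (ψ j - m) * c j = (∑ j, ψ j * c j) - m := by
      rw [show (∑ j, (ψ j - m) * c j) = (∑ j, ψ j * c j) - ∑ j, m * c j by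
        rw [← Finset.sum_sub_distrib]; exact Finset.sum_congr rfl fun j _ => by ring]
      rw [← Finset.mul_sum, hc1, mul_one]
    have e3 : (∑ i, ∑ j, Real.exp (-(C i j - (φ i + m) - (ψ j - m)) / η))
        = ∑ i, ∑ j, Real.exp (-(C i j - φ i - ψ j) / η) := by
      apply Finset.sum_congr rfl; intro i _
      apply Finset.sum_congr rfl; intro j _
      congr 1
      ring
    rw [e1, e2, e3]
    ring
  -- compact box and maximizer
  set K : Set ((Fin n → ℝ) × (Fin n → ℝ)) :=
    {p | (∀ i, |p.1 i| ≤ Mr) ∧ (∀ j, |p.2 j| ≤ Mc)} with hK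
  have hKeq : K = (Set.univ.pi fun _ : Fin n => Set.Icc (-Mr) Mr) ×ˢ
      (Set.univ.pi fun _ : Fin n => Set.Icc (-Mc) Mc) := by
    ext p
    simp only [hK, Set.mem_setOf_eq, Set.mem_prod, Set.mem_pi, Set.mem_univ, Set.mem_Icc,
      forall_const, abs_le, forall_and]
  have hKc : IsCompact K := by
    rw [hKeq]
    exact (isCompact_univ_pi fun _ => isCompact_Icc).prod
      (isCompact_univ_pi fun _ => isCompact_Icc)
  have hKne : K.Nonempty := by
    refine ⟨(0, 0), ?_, ?_⟩ <;> intro i <;> simpa using by assumption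
  have hcont : Continuous fun p : (Fin n → ℝ) × (Fin n → ℝ) => d p.1 p.2 := by
    have heq : (fun p : (Fin n → ℝ) × (Fin n → ℝ) => d p.1 p.2) =
        fun p => (∑ i, p.1 i * r i) + (∑ j, p.2 j * c j) -
          η * Real.log (∑ i, ∑ j, Real.exp (-(C i j - p.1 i - p.2 j) / η)) := by
      funext p
      exact hd p.1 p.2
    rw [heq]
    refine Continuous.sub (Continuous.add ?_ ?_) (continuous_const.mul (Continuous.log ?_ ?_))
    · exact continuous_finset_sum _ fun i _ =>
        ((continuous_apply i).comp continuous_fst).mul continuous_const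
    · exact continuous_finset_sum _ fun j _ =>
        ((continuous_apply j).comp continuous_snd).mul continuous_const
    · refine continuous_finset_sum _ fun i _ => continuous_finset_sum _ fun j _ => ?_
      exact Real.continuous_exp.comp (by fun_prop)
    · intro p
      exact (Finset.sum_pos (fun i _ => Finset.sum_pos
        (fun j _ => Real.exp_pos _) Finset.univ_nonempty) Finset.univ_nonempty).ne'
  obtain ⟨p, hpK, hpmax⟩ := hKc.exists_isMaxOn hKne hcont.continuousOn
  refine ⟨p.1, p.2, ?_, hpK.1, hpK.2⟩
  intro φ' ψ'
  -- Sinkhorn-style improvement into the box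
  set T := ∑ j, Real.exp (ψ' j / η) with hT
  have hTpos : 0 < T := Finset.sum_pos (fun j _ => Real.exp_pos _) Finset.univ_nonempty
  set m := η * Real.log T with hm
  set φs : Fin n → ℝ := fun i => Φ ψ' i + m with hφs
  set ψs : Fin n → ℝ := fun j => Ψf φs j with hψs
  have hdivle : ∀ x y : ℝ, x ≤ y → x / η ≤ y / η := by
    intro x y h
    rw [div_eq_mul_inv, div_eq_mul_inv]
    exact mul_le_mul_of_nonneg_right h (by positivity)
  -- bounds on A ψ'
  have hAub : ∀ i, A ψ' i ≤ T := by
    intro i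
    rw [hA, hT]
    apply Finset.sum_le_sum
    intro j _
    exact Real.exp_le_exp.mpr (hdivle _ _ (by linarith [hC i j]))
  have hAlb : ∀ i, Real.exp (-Cinf / η) * T ≤ A ψ' i := by
    intro i
    rw [hA, hT, Finset.mul_sum]
    apply Finset.sum_le_sum
    intro j _
    rw [← Real.exp_add]
    apply Real.exp_le_exp.mpr
    rw [show -Cinf / η + ψ' j / η = (ψ' j - Cinf) / η by ring]
    exact hdivle _ _ (by linarith [hCub i j])
  have hlogAub : ∀ i, Real.log (A ψ' i) ≤ Real.log T :=
    fun i => Real.log_le_log (hApos ψ' i) (hAub i)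
  have hlogAlb : ∀ i, Real.log T - Cinf / η ≤ Real.log (A ψ' i) := by
    intro i
    have := Real.log_le_log (mul_pos (Real.exp_pos _) hTpos) (hAlb i)
    rwa [Real.log_mul (Real.exp_ne_zero _) hTpos.ne', Real.log_exp, neg_div,
      neg_add_eq_sub] at this
  -- bounds on φs
  have hφslb : ∀ i, η * Real.log (r i) ≤ φs i := by
    intro i
    have h := mul_le_mul_of_nonneg_left (hlogAub i) hη.le
    simp only [hφs, hΦ, hm]
    nlinarith [h]
  have hφsub : ∀ i, φs i ≤ η * Real.log (r i) + Cinf := by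
    intro i
    have h := mul_le_mul_of_nonneg_left (hlogAlb i) hη.le
    have hc' : η * (Cinf / η) = Cinf := by field_simp; try ring
    simp only [hφs, hΦ, hm]
    nlinarith [h, hc']
  have hφsbox : ∀ i, |φs i| ≤ Mr := by
    intro i
    have h1 : η * Real.log rmin ≤ η * Real.log (r i) :=
      mul_le_mul_of_nonneg_left (Real.log_le_log hrminpos (hrminle i)) hη.le
    have h2 : η * Real.log (r i) ≤ 0 :=
      mul_nonpos_of_nonneg_of_nonpos hη.le (Real.log_nonpos (hr0 i).le (hrle1 i))
    rw [abs_le, hMr]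
    constructor
    · have := hφslb i; linarith
    · have := hφsub i; linarith
  -- bounds on B φs
  have hBub : ∀ j, B φs j ≤ Real.exp (Cinf / η) := by
    intro j
    rw [hB]
    calc ∑ i, Real.exp ((φs i - C i j) / η)
        ≤ ∑ i, r i * Real.exp (Cinf / η) := by
          apply Finset.sum_le_sum
          intro i _
          have harg : (φs i - C i j) / η ≤ Real.log (r i) + Cinf / η := by
            have h1 : φs i - C i j ≤ η * Real.log (r i) + Cinf := by
              have := hφsub i; linarith [hC i j]
            have := hdivle _ _ h1
            rwa [show (η * Real.log (r i) + Cinf) / η = Real.log (r i) + Cinf / η by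
              field_simp; try ring] at this
          calc Real.exp ((φs i - C i j) / η)
              ≤ Real.exp (Real.log (r i) + Cinf / η) := Real.exp_le_exp.mpr harg
            _ = r i * Real.exp (Cinf / η) := by
                rw [Real.exp_add, Real.exp_log (hr0 i)]
      _ = Real.exp (Cinf / η) := by rw [← Finset.sum_mul, hr1, one_mul]
  have hBlb : ∀ j, Real.exp (-Cinf / η) ≤ B φs j := by
    intro j
    rw [hB]
    calc Real.exp (-Cinf / η)
        = ∑ i, r i * Real.exp (-Cinf / η) := by rw [← Finset.sum_mul, hr1, one_mul]
      _ ≤ ∑ i, Real.exp ((φs i - C i j) / η) := by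
          apply Finset.sum_le_sum
          intro i _
          have harg : Real.log (r i) + -Cinf / η ≤ (φs i - C i j) / η := by
            have h1 : η * Real.log (r i) - Cinf ≤ φs i - C i j := by
              have := hφslb i; linarith [hCub i j]
            have := hdivle _ _ h1
            rwa [show (η * Real.log (r i) - Cinf) / η = Real.log (r i) + -Cinf / η by
              field_simp; try ring] at this
          calc r i * Real.exp (-Cinf / η)
              = Real.exp (Real.log (r i) + -Cinf / η) := by
                rw [Real.exp_add, Real.exp_log (hr0 i)]
            _ ≤ Real.exp ((φs i - C i j) / η) := Real.exp_le_exp.mpr harg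
  have hlogBub : ∀ j, Real.log (B φs j) ≤ Cinf / η := by
    intro j
    have := Real.log_le_log (hBpos φs j) (hBub j)
    rwa [Real.log_exp] at this
  have hlogBlb : ∀ j, -Cinf / η ≤ Real.log (B φs j) := by
    intro j
    have := Real.log_le_log (Real.exp_pos _) (hBlb j)
    rwa [Real.log_exp] at this
  have hψsbox : ∀ j, |ψs j| ≤ Mc := by
    intro j
    have h1 : η * Real.log cmin ≤ η * Real.log (c j) :=
      mul_le_mul_of_nonneg_left (Real.log_le_log hcminpos (hcminle j)) hη.le
    have h2 : η * Real.log (c j) ≤ 0 :=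
      mul_nonpos_of_nonneg_of_nonpos hη.le (Real.log_nonpos (hc0 j).le (hcle1 j))
    have h3 : η * Real.log (B φs j) ≤ η * (Cinf / η) :=
      mul_le_mul_of_nonneg_left (hlogBub j) hη.le
    have h4 : η * (-Cinf / η) ≤ η * Real.log (B φs j) :=
      mul_le_mul_of_nonneg_left (hlogBlb j) hη.le
    have hc' : η * (Cinf / η) = Cinf := by field_simp; try ring
    have hc'' : η * (-Cinf / η) = -Cinf := by field_simp; try ring
    rw [hc'] at h3
    rw [hc''] at h4
    have hψsj : ψs j = η * Real.log (c j) - η * Real.log (B φs j) := by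
      simp only [hψs, hΨ]; ring
    rw [abs_le, hMc, hψsj]
    constructor <;> linarith
  -- the chain of inequalities
  have step1 : d φ' ψ' ≤ d (Φ ψ') ψ' := L1 φ' ψ'
  have step2 : d (Φ ψ') ψ' = d φs (fun j => ψ' j - m) := by
    rw [← hshift (Φ ψ') ψ' m]
  have step3 : d φs (fun j => ψ' j - m) ≤ d φs ψs := L2 φs _
  have hmem : (φs, ψs) ∈ K := ⟨hφsbox, hψsbox⟩
  have step4 : d φs ψs ≤ d p.1 p.2 := hpmax hmem
  linarith
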